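/- Let i≠j∈[n] with ‖p(i)‖=‖p(j)‖=1 and p(i)≠p(j), where p(i),p(j)∈ℝ². Then, writing d_{ij}=(p(i)-p(j))/‖p(i)-p(j)‖ and p^⊥(k)=(-p_y(k),p_x(k)), one has the 2×2 matrix identity -d_{ij}d_{ij}ᵀ = (1/2)p(i)p(j)ᵀ - (1/2)p^⊥(i)p^⊥(j)ᵀ - (1/2)I. -/

import Mathlib

open Matrix

noncomputable section

def enorm' {d : ℕ} (v : Fin d → ℝ) : ℝ := Real.sqrt (∑ i, v i ^ 2)

def dvec {n d : ℕ} (p : Fin n → Fin d → ℝ) (i j : Fin n) : Fin d → ℝ :=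
  if p i = p j then 0 else (enorm' (p i - p j))⁻¹ • (p i - p j)

abbrev EdgeIdx {n : ℕ} (G : SimpleGraph (Fin n)) [DecidableRel G.Adj] : Type :=
  {e : Fin n × Fin n // e.1 < e.2 ∧ G.Adj e.1 e.2}

def rigidity {n d : ℕ} (G : SimpleGraph (Fin n)) [DecidableRel G.Adj]
    (p : Fin n → Fin d → ℝ) : Matrix (Fin n × Fin d) (EdgeIdx G) ℝ :=
  fun v e => ((if v.1 = e.1.1 then (1:ℝ) else 0) - (if v.1 = e.1.2 then 1 else 0))
      * dvec p e.1.1 e.1.2 v.2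

def stiffness {n d : ℕ} (G : SimpleGraph (Fin n)) [DecidableRel G.Adj]
    (p : Fin n → Fin d → ℝ) : Matrix (Fin n × Fin d) (Fin n × Fin d) ℝ :=
  rigidity G p * (rigidity G p)ᴴ

def lowerStiffness {n d : ℕ} (G : SimpleGraph (Fin n)) [DecidableRel G.Adj]
    (p : Fin n → Fin d → ℝ) : Matrix (EdgeIdx G) (EdgeIdx G) ℝ :=
  (rigidity G p)ᴴ * rigidity G p

theorem stiffness_isHermitian {n d : ℕ} (G : SimpleGraph (Fin n)) [DecidableRel G.Adj]
    (p : Fin n → Fin d → ℝ) : (stiffness G p).IsHermitian :=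
  Matrix.isHermitian_mul_conjTranspose_self _

def eigs {m : Type*} [Fintype m] [DecidableEq m] (A : Matrix m m ℝ)
    (hA : A.IsHermitian) : Multiset ℝ :=
  Finset.univ.val.map hA.eigenvalues

def ascEigs {m : Type*} [Fintype m] [DecidableEq m] (A : Matrix m m ℝ)
    (hA : A.IsHermitian) : List ℝ :=
  (eigs A hA).sort (· ≤ ·)

def nthSmallest {m : Type*} [Fintype m] [DecidableEq m] (A : Matrix m m ℝ)
    (hA : A.IsHermitian) (k : ℕ) : ℝ :=
  (ascEigs A hA).getD (k-1) 0

/-- For distinct unit vectors `u = p(i)`, `w = p(j)` in `ℝ²`, with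
`d_{ij} = (u - w)/‖u - w‖` and `p^⊥ = (-p_y, p_x)`, one has the `2 × 2` matrix
identity `-d_{ij} d_{ij}ᵀ = (1/2) u wᵀ - (1/2) u^⊥ (w^⊥)ᵀ - (1/2) I`. -/
theorem block_identity_circle (u w : Fin 2 → ℝ)
    (hu : enorm' u = 1) (hw : enorm' w = 1) (huw : u ≠ w) :
    -(Matrix.vecMulVec ((enorm' (u - w))⁻¹ • (u - w)) ((enorm' (u - w))⁻¹ • (u - w))) =
      (1/2 : ℝ) • Matrix.vecMulVec u w -
      (1/2 : ℝ) • Matrix.vecMulVec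
          (fun t : Fin 2 => if t = 0 then -(u 1) else u 0)
          (fun t : Fin 2 => if t = 0 then -(w 1) else w 0) -
      (1/2 : ℝ) • (1 : Matrix (Fin 2) (Fin 2) ℝ) := by
  
  have hupos : (0:ℝ) ≤ u 0 ^ 2 + u 1 ^ 2 := by positivity
  have hu2 : u 0 ^ 2 + u 1 ^ 2 = 1 := by
    have h := hu
    simp only [enorm', Fin.sum_univ_two] at h
    nlinarith [Real.sq_sqrt hupos, h]
  have hwpos : (0:ℝ) ≤ w 0 ^ 2 + w 1 ^ 2 := by positivity
  have hw2 : w 0 ^ 2 + w 1 ^ 2 = 1 := by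
    have h := hw
    simp only [enorm', Fin.sum_univ_two] at h
    nlinarith [Real.sq_sqrt hwpos, h]
  have hAnonneg : (0:ℝ) ≤ (u 0 - w 0) ^ 2 + (u 1 - w 1) ^ 2 := by positivity
  have hApos : (0:ℝ) < (u 0 - w 0) ^ 2 + (u 1 - w 1) ^ 2 := by
    rcases lt_or_eq_of_le hAnonneg with h | h
    · exact h
    · exfalso
      apply huw
      have h0 : u 0 = w 0 := by nlinarith [sq_nonneg (u 0 - w 0), sq_nonneg (u 1 - w 1)]
      have h1 : u 1 = w 1 := by nlinarith [sq_nonneg (u 0 - w 0), sq_nonneg (u 1 - w 1)]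
      funext t
      fin_cases t <;> assumption
  have hE : enorm' (u - w) = Real.sqrt ((u 0 - w 0) ^ 2 + (u 1 - w 1) ^ 2) := by
    simp [enorm', Fin.sum_univ_two]
  have hEsq : (enorm' (u - w)) ^ 2 = (u 0 - w 0) ^ 2 + (u 1 - w 1) ^ 2 := by
    rw [hE]; exact Real.sq_sqrt hAnonneg
  have hEpos : 0 < enorm' (u - w) := by
    rw [hE]; exact Real.sqrt_pos.mpr hApos
  have hEne : enorm' (u - w) ≠ 0 := ne_of_gt hEpos
  have hEE : enorm' (u - w) * enorm' (u - w) = (u 0 - w 0) ^ 2 + (u 1 - w 1) ^ 2 := by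
    rw [← hEsq]; ring
  ext a b
  fin_cases a <;> fin_cases b <;>
    (simp only [Matrix.neg_apply, Matrix.vecMulVec_apply, Matrix.sub_apply,
      Matrix.smul_apply, Matrix.one_apply, Pi.smul_apply, Pi.sub_apply,
      smul_eq_mul]
     norm_num
     field_simp
     rw [hEsq])
  · linear_combination (2*w 0^2 - 2 - (u 0*w 0 - u 1*w 1 - 1))*hu2 +
      (-2*u 1^2 - (u 0*w 0 - u 1*w 1 - 1))*hw2
  · linear_combination (2*w 0*w 1 - (u 0*w 1 + u 1*w 0))*hu2 +
      (2*u 0*u 1 - (u 0*w 1 + u 1*w 0))*hw2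
  · linear_combination (2*w 0*w 1 - (u 0*w 1 + u 1*w 0))*hu2 +
      (2*u 0*u 1 - (u 0*w 1 + u 1*w 0))*hw2
  · linear_combination (2*w 1^2 - 2 - (u 1*w 1 - u 0*w 0 - 1))*hu2 +
      (-2*u 0^2 - (u 1*w 1 - u 0*w 0 - 1))*hw2
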